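/- Unsoundness of the rule inferring F from m̄₁F, …, m̄_kF: there exist a DSTL model M and a DSL formula F such that M ⊨_T m̄ᵢ F for every component i but not M ⊨_T F. Concretely, in the computation with a single component m whose states are s₀, s₁, s₂, … with valuation p ∈ V({s₀}), p ∉ V({sⱼ}) for j ≥ 1, q ∈ V({sⱼ}) for j ≥ 1, and q ∉ V({s₀}), the formula m̄(p ∨ q) is satisfied by every distributed state, but the distributed state {s₀, s₁} does not satisfy p ∨ q. -/

import Mathlib

namespace DSLPaper

/-- DSL formulae over a set `P` of propositional letters and `k` components. -/
inductive Formula (P : Type) (k : ℕ) : Type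
  | atom : P → Formula P k
  | falsum : Formula P k
  | neg : Formula P k → Formula P k
  | conj : Formula P k → Formula P k → Formula P k
  | loc : Fin k → Formula P k → Formula P k

variable {P : Type} {k : ℕ}

/-- Material implication `F → G`, defined from `neg` and `conj`. -/
def Formula.impl (F G : Formula P k) : Formula P k := .neg (.conj F (.neg G))

/-- Bi-implication `F ↔ G`. -/
def Formula.biimpl (F G : Formula P k) : Formula P k := .conj (F.impl G) (G.impl F)

/-- Disjunction `F ∨ F'`, abbreviating `∼(∼F ∧ ∼F')`. -/
def Formula.disj (F G : Formula P k) : Formula P k := .neg (.conj (.neg F) (.neg G))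

/-- `⊤ = ∼⊥`. -/
def Formula.top : Formula P k := .neg .falsum

/-- The dual modality `m̄ᵢ F = ∼ mᵢ ∼F`. -/
def Formula.bar (i : Fin k) (F : Formula P k) : Formula P k := .neg (.loc i (.neg F))

/-- A computation: states of each component `i` form a (finite or infinite) sequence
`sᵢ⁰, sᵢ¹, …` (each state is determined by its component and index, and the indices of
each component form a downward-closed subset of `ℕ`), together with communications
between states of distinct components. -/
structure Computation (P : Type) (k : ℕ) where
  State : Type
  comp : State → Fin k
  pos : State → ℕ
  state_ext : ∀ s t : State, comp s = comp t → pos s = pos t → s = t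
  seq : ∀ s : State, ∀ j : ℕ, j ≤ pos s → ∃ t : State, comp t = comp s ∧ pos t = j
  comm : State → State → Prop
  comm_ne : ∀ s t : State, comm s t → comp s ≠ comp t

/-- The next-state relation `R`: exactly the local-successor pairs and communications. -/
def Computation.nextR (C : Computation P k) (s t : C.State) : Prop :=
  (C.comp s = C.comp t ∧ C.pos t = C.pos s + 1) ∨ C.comm s t

/-- `R*`: reflexive-transitive closure of `R`. -/
def Computation.Rstar (C : Computation P k) : C.State → C.State → Prop :=
  Relation.ReflTransGen C.nextR

/-- `R⁼`: reflexive closure of `R`. -/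
def Computation.Req (C : Computation P k) : C.State → C.State → Prop :=
  Relation.ReflGen C.nextR

/-- DSL satisfaction at a distributed state `ds ∈ DS = 2^S`; the valuation is given by
its values on singletons `V : State → 2^P`, with `V(ds) = ⋂_{s ∈ ds} V({s})` built in. -/
def CSat (C : Computation P k) (V : C.State → Set P) : Set C.State → Formula P k → Prop
  | ds, .atom p => ∀ s ∈ ds, p ∈ V s
  | _, .falsum => False
  | ds, .neg F => ¬ CSat C V ds F
  | ds, .conj F G => CSat C V ds F ∧ CSat C V ds G
  | ds, .loc i F => ∃ s ∈ ds, C.comp s = i ∧ CSat C V {s} F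

/-- `ds ≤ ds'`. -/
def dsLe (C : Computation P k) (ds ds' : Set C.State) : Prop :=
  (∀ s ∈ ds, ∃ s' ∈ ds', C.Rstar s s') ∧ (∀ s' ∈ ds', ∃ s ∈ ds, C.Rstar s s')

/-- `ds ≤_c ds'`. -/
def dsLeC (C : Computation P k) (ds ds' : Set C.State) : Prop :=
  (∀ s ∈ ds, ∃ s' ∈ ds', C.Req s s') ∧ (∀ s' ∈ ds', ∃ s ∈ ds, C.Req s s')

/-- `M ⊨_T F leads_to F'`. -/
def LeadsTo (C : Computation P k) (V : C.State → Set P) (F F' : Formula P k) : Prop :=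
  ∀ ds : Set C.State, CSat C V ds F → ∃ ds' : Set C.State, dsLe C ds ds' ∧ CSat C V ds' F'

/-- `M ⊨_T F because F'`. -/
def Because (C : Computation P k) (V : C.State → Set P) (F F' : Formula P k) : Prop :=
  ∀ ds : Set C.State, CSat C V ds F → ∃ ds' : Set C.State, dsLe C ds' ds ∧ CSat C V ds' F'

/-- `M ⊨_T F unless F'`. -/
def Unless (C : Computation P k) (V : C.State → Set P) (F F' : Formula P k) : Prop :=
  ∀ ds : Set C.State, CSat C V ds F → ∃ ds' : Set C.State, dsLeC C ds ds' ∧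
    ((¬ ds ⊆ ds' ∧ CSat C V ds' F) ∨ CSat C V ds' F')

/-- `stable F  :=  F unless ⊥`. -/
def Stable (C : Computation P k) (V : C.State → Set P) (F : Formula P k) : Prop :=
  Unless C V F .falsum

/-- The concrete computation with a single component whose states are `s₀, s₁, s₂, …`
(`State = ℕ`, `comp` constant, `pos = id`, no communications). -/
def exComp : Computation Bool 1 where
  State := ℕ
  comp := fun _ => 0
  pos := id
  state_ext := fun _ _ _ h => h
  seq := fun s j _ => ⟨j, rfl, rfl⟩
  comm := fun _ _ => False
  comm_ne := fun _ _ h => h.elim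

/-- The valuation: the atom `true` plays `p` and holds exactly at `s₀`; the atom
`false` plays `q` and holds exactly at the `sⱼ` with `j ≥ 1`. -/
def exV : ℕ → Set Bool := fun n => if n = 0 then {true} else {false}

/-- Unsoundness of the rule inferring `F` from `m̄₁F, …, m̄_kF`: in the concrete
single-component model, `m̄(p ∨ q)` is satisfied by every distributed state, but the
distributed state `{s₀, s₁}` does not satisfy `p ∨ q`; hence there exist a DSTL model
`M` and a DSL formula `F` with `M ⊨_T m̄ᵢ F` for every component `i` but not `M ⊨_T F`. -/
theorem unsound_rule :
    (∀ ds : Set exComp.State,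
      CSat exComp exV ds
        (((Formula.atom true).disj (Formula.atom false)).bar 0)) ∧
    ¬ CSat exComp exV ({0, 1} : Set ℕ)
        ((Formula.atom true).disj (Formula.atom false)) ∧
    ∃ (Cm : Computation Bool 1) (Vm : Cm.State → Set Bool) (Fm : Formula Bool 1),
      (∀ i : Fin 1, ∀ ds : Set Cm.State, CSat Cm Vm ds (Fm.bar i)) ∧
      ¬ (∀ ds : Set Cm.State, CSat Cm Vm ds Fm) := by
  have key : ∀ s : ℕ, CSat exComp exV {s}
      ((Formula.atom true).disj (Formula.atom false)) := by
    intro s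
    simp only [Formula.disj, CSat, not_and, not_not, Set.mem_singleton_iff,
      forall_eq]
    intro hp
    by_cases h : s = 0
    · exact (hp (fun t ht => by rw [show t = s from ht]; simp [exV, h])).elim
    · intro t ht; rw [show t = s from ht]; simp [exV, h]
  have h1 : ∀ ds : Set exComp.State,
      CSat exComp exV ds
        (((Formula.atom true).disj (Formula.atom false)).bar 0) := by
    intro ds
    intro hc
    obtain ⟨s, _, _, hne⟩ := hc
    exact (hne : ¬ _) (key s)
  have h2 : ¬ CSat exComp exV ({0, 1} : Set ℕ)
      ((Formula.atom true).disj (Formula.atom false)) := by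
    simp only [Formula.disj, CSat, not_not]
    refine ⟨fun h => ?_, fun h => ?_⟩
    · have := h (1:ℕ) (show (1:ℕ) = 0 ∨ (1:ℕ) = 1 from Or.inr rfl); simp [exV] at this
    · have := h (0:ℕ) (show (0:ℕ) = 0 ∨ (0:ℕ) = 1 from Or.inl rfl); simp [exV] at this
  refine ⟨h1, h2, exComp, exV, (Formula.atom true).disj (Formula.atom false),
    fun i ds => ?_, fun h => h2 (h _)⟩
  have : i = 0 := by omega
  subst this
  exact h1 ds

end DSLPaper
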